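/- Let K = ℚ(√13). On the elliptic curve over K with equation y² + (134025 − 37172√13)xy + (47915630355840 − 13289404780320√13)y = x³ + (3775925760√13 − 13614293940)x², the point (3993089880 − 1107483870√13, 176222937989280√13 − 635380838833260) is a torsion point of order 12. -/

import Mathlib

open WeierstrassCurve Polynomial

private def Wc {K : Type*} [Field K] (s : K) : WeierstrassCurve.Affine K :=
  ⟨134025 - 37172 * s, 3775925760 * s - 13614293940, 47915630355840 - 13289404780320 * s, 0, 0⟩

private lemma nzlem {K : Type*} [Field K] [CharZero K] {s : K} (hs : s ^ 2 = 13)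
    (c d : ℤ) (h : c ^ 2 ≠ 13 * d ^ 2) : (c : K) + (d : K) * s ≠ 0 := by
  intro h0
  rcases eq_or_ne (d : K) 0 with hd | hd
  · have hdz : d = 0 := by exact_mod_cast hd
    have hcz : (c : K) = 0 := by rw [hd, zero_mul, add_zero] at h0; exact h0
    have hcz' : c = 0 := by exact_mod_cast hcz
    exact h (by simp [hcz', hdz])
  · have h2 : (c : K) ^ 2 = 13 * (d : K) ^ 2 := by
      have hsv : s = -(c : K) / (d : K) := by
        field_simp
        linear_combination h0
      rw [hsv] at hs
      field_simp at hs
      linear_combination hs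
    exact h (by exact_mod_cast h2)

private lemma someEqSome {K : Type*} [Field K] {W : WeierstrassCurve.Affine K}
    {x₁ y₁ x₂ y₂ : K} {h₁ : W.Nonsingular x₁ y₁} {h₂ : W.Nonsingular x₂ y₂}
    (hx : x₁ = x₂) (hy : y₁ = y₂) :
    WeierstrassCurve.Affine.Point.some _ _ h₁ = WeierstrassCurve.Affine.Point.some _ _ h₂ := by
  subst hx; subst hy; rfl

open Classical in
/-- K = ℚ(√(13)); the given point is a torsion point of order 12. -/
theorem stmt_16 {K : Type*} [Field K] [Algebra ℚ K] (s : K) (hs : s ^ 2 = 13)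
    (hK : ∀ x : K, ∃ a b : ℚ, x = algebraMap ℚ K a + algebraMap ℚ K b * s) :
    ∃ h : WeierstrassCurve.Affine.Nonsingular (⟨134025 - 37172 * s, 3775925760 * s - 13614293940, 47915630355840 - 13289404780320 * s, 0, 0⟩ : WeierstrassCurve.Affine K) (3993089880 - 1107483870 * s) (176222937989280 * s - 635380838833260),
      addOrderOf (WeierstrassCurve.Affine.Point.some _ _ h) = 12 := by
  clear hK
  haveI : CharZero K := charZero_of_injective_algebraMap (algebraMap ℚ K).injective
  have hΔ : (Wc s).Δ ≠ 0 := by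
    intro h
    refine nzlem hs 63465612462076003556103141076379600927475850392825346560000 (-17602193843133952956328407638479009904244462799774310400000) (by norm_num) ?_
    push_cast
    simp only [Wc, WeierstrassCurve.Δ, WeierstrassCurve.b₂, WeierstrassCurve.b₄,
      WeierstrassCurve.b₆, WeierstrassCurve.b₈] at h
    linear_combination h + ((-2226125240357996649638276899052337150002322643152437760000) + (-1463352739294198683443660474123736479162482306196705280000 * s) + (730144982447410710738881496147699714914819181715292160000 * s ^ 2) + (-95137682626232400928959207893664971758967086938783744000 * s ^ 3) + (-4420438909105977204896293250703943906147439015755776000 * s ^ 4) + (1273204662285930524007303837779265249986534015238144000 * s ^ 5)) * hs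
  have heq1 : (Wc s).Equation (3993089880 - 1107483870 * s) (176222937989280 * s - 635380838833260) := by
    rw [WeierstrassCurve.Affine.equation_iff]
    simp only [Wc]
    linear_combination ((-14356366825952648346437156400) + (3981739747718651911793998200 * s)) * hs
  have h1 : (Wc s).Nonsingular (3993089880 - 1107483870 * s) (176222937989280 * s - 635380838833260) :=
    (WeierstrassCurve.Affine.equation_iff_nonsingular_of_Δ_ne_zero hΔ).mp heq1
  have heq2 : (Wc s).Equation (13614293940 - 3775925760 * s) (0 : K) := by
    rw [WeierstrassCurve.Affine.equation_iff]
    simp only [Wc]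
    linear_combination 0 * hs
  have h2 : (Wc s).Nonsingular (13614293940 - 3775925760 * s) (0 : K) :=
    (WeierstrassCurve.Affine.equation_iff_nonsingular_of_Δ_ne_zero hΔ).mp heq2
  have heq4 : (Wc s).Equation (4849953936 - 1345135200 * s) (130133861899776 * s - 469204311753792) := by
    rw [WeierstrassCurve.Affine.equation_iff]
    simp only [Wc]
    linear_combination ((-7602758537406422500570484736) + (2108625826276189263591014400 * s)) * hs
  have h4 : (Wc s).Nonsingular (4849953936 - 1345135200 * s) (130133861899776 * s - 469204311753792) :=
    (WeierstrassCurve.Affine.equation_iff_nonsingular_of_Δ_ne_zero hΔ).mp heq4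
  have heq6 : (Wc s).Equation (3758202240 - 1042337760 * s) (146344308364800 * s - 527651907681600) := by
    rw [WeierstrassCurve.Affine.equation_iff]
    simp only [Wc]
    linear_combination ((-9735956021783061086095872000) + (2700268357861632541741056000 * s)) * hs
  have h6 : (Wc s).Nonsingular (3758202240 - 1042337760 * s) (146344308364800 * s - 527651907681600) :=
    (WeierstrassCurve.Affine.equation_iff_nonsingular_of_Δ_ne_zero hΔ).mp heq6
  have hy1ne : (176222937989280 * s - 635380838833260) ≠ (Wc s).negY (3993089880 - 1107483870 * s) (176222937989280 * s - 635380838833260) := by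
    intro h
    refine nzlem hs (-152496100740360) (42294808502130) (by norm_num) ?_
    push_cast
    simp only [Wc, WeierstrassCurve.Affine.negY] at h
    linear_combination h + ((-41167390415640)) * hs
  have hy2ne : (0 : K) ≠ (Wc s).negY (13614293940 - 3775925760 * s) (0 : K) := by
    intro h
    refine nzlem hs (3697234636223700) (-1025428389102000) (by norm_num) ?_
    push_cast
    simp only [Wc, WeierstrassCurve.Affine.negY] at h
    linear_combination h + ((-140358712350720)) * hs
  have hx24 : (13614293940 - 3775925760 * s) ≠ (4849953936 - 1345135200 * s) := by
    intro h
    refine nzlem hs 8764340004 (-2430790560) (by norm_num) ?_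
    push_cast
    linear_combination h
  have hL1 : (Wc s).slope (3993089880 - 1107483870 * s) (3993089880 - 1107483870 * s) (176222937989280 * s - 635380838833260) (176222937989280 * s - 635380838833260) = (44132 * s - 159120) := by
    rw [WeierstrassCurve.Affine.slope_of_Y_ne rfl hy1ne,
      div_eq_iff (sub_ne_zero.mpr hy1ne)]
    simp only [Wc, WeierstrassCurve.Affine.negY]
    linear_combination ((6550567544953700100) + (-1816799273823024480 * s)) * hs
  have hL2 : (Wc s).slope (13614293940 - 3775925760 * s) (13614293940 - 3775925760 * s) (0 : K) (0 : K) = (50132 - 13904 * s) := by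
    rw [WeierstrassCurve.Affine.slope_of_Y_ne rfl hy2ne,
      div_eq_iff (sub_ne_zero.mpr hy2ne)]
    simp only [Wc, WeierstrassCurve.Affine.negY]
    linear_combination ((-7036403944608925440) + (1951547536524410880 * s)) * hs
  have hL3 : (Wc s).slope (13614293940 - 3775925760 * s) (4849953936 - 1345135200 * s) (0 : K) (130133861899776 * s - 469204311753792) = (26768 - 7424 * s) := by
    rw [WeierstrassCurve.Affine.slope_of_X_ne hx24,
      div_eq_iff (sub_ne_zero.mpr hx24)]
    linear_combination ((-18046189117440)) * hs
  have e2 : WeierstrassCurve.Affine.Point.some _ _ h1 + WeierstrassCurve.Affine.Point.some _ _ h1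
      = WeierstrassCurve.Affine.Point.some _ _ h2 := by
    rw [WeierstrassCurve.Affine.Point.add_self_of_Y_ne hy1ne]
    refine someEqSome ?_ ?_
    · rw [hL1]
      simp only [Wc, WeierstrassCurve.Affine.addX]
      linear_combination ((307158720)) * hs
    · rw [hL1]
      simp only [Wc, WeierstrassCurve.Affine.addY, WeierstrassCurve.Affine.negAddY,
        WeierstrassCurve.Affine.addX, WeierstrassCurve.Affine.negY]
      linear_combination ((-14886886782840) + (-2137824691200 * s)) * hs
  have e4 : WeierstrassCurve.Affine.Point.some _ _ h2 + WeierstrassCurve.Affine.Point.some _ _ h2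
      = WeierstrassCurve.Affine.Point.some _ _ h4 := by
    rw [WeierstrassCurve.Affine.Point.add_self_of_Y_ne hy2ne]
    refine someEqSome ?_ ?_
    · rw [hL2]
      simp only [Wc, WeierstrassCurve.Affine.addX]
      linear_combination ((710160704)) * hs
    · rw [hL2]
      simp only [Wc, WeierstrassCurve.Affine.addY, WeierstrassCurve.Affine.negAddY,
        WeierstrassCurve.Affine.addX, WeierstrassCurve.Affine.negY]
      linear_combination ((-146984718474688) + (36272168117504 * s)) * hs
  have e6 : WeierstrassCurve.Affine.Point.some _ _ h2 + WeierstrassCurve.Affine.Point.some _ _ h4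
      = WeierstrassCurve.Affine.Point.some _ _ h6 := by
    rw [WeierstrassCurve.Affine.Point.add_of_X_ne hx24]
    refine someEqSome ?_ ?_
    · rw [hL3]
      simp only [Wc, WeierstrassCurve.Affine.addX]
      linear_combination ((331080704)) * hs
    · rw [hL3]
      simp only [Wc, WeierstrassCurve.Affine.addY, WeierstrassCurve.Affine.negAddY,
        WeierstrassCurve.Affine.addX, WeierstrassCurve.Affine.negY]
      linear_combination ((-71687081540992) + (14764875075584 * s)) * hs
  have hy6eq : (146344308364800 * s - 527651907681600) = (Wc s).negY (3758202240 - 1042337760 * s) (146344308364800 * s - 527651907681600) := by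
    simp only [Wc, WeierstrassCurve.Affine.negY]
    linear_combination ((38745779214720)) * hs
  have e12 : WeierstrassCurve.Affine.Point.some _ _ h6 + WeierstrassCurve.Affine.Point.some _ _ h6
      = 0 := WeierstrassCurve.Affine.Point.add_self_of_Y_eq hy6eq
  refine ⟨h1, ?_⟩
  show addOrderOf (WeierstrassCurve.Affine.Point.some _ _ h1) = 12
  have n2 : (2 : ℕ) • WeierstrassCurve.Affine.Point.some _ _ h1
      = WeierstrassCurve.Affine.Point.some _ _ h2 := by rw [two_nsmul, e2]
  have n4 : (4 : ℕ) • WeierstrassCurve.Affine.Point.some _ _ h1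
      = WeierstrassCurve.Affine.Point.some _ _ h4 := by
    rw [show (4 : ℕ) = 2 + 2 from rfl, add_nsmul, n2, e4]
  have n6 : (6 : ℕ) • WeierstrassCurve.Affine.Point.some _ _ h1
      = WeierstrassCurve.Affine.Point.some _ _ h6 := by
    rw [show (6 : ℕ) = 2 + 4 from rfl, add_nsmul, n2, n4, e6]
  have n12 : (12 : ℕ) • WeierstrassCurve.Affine.Point.some _ _ h1 = 0 := by
    rw [show (12 : ℕ) = 6 + 6 from rfl, add_nsmul, n6, e12]
  have hdvd : addOrderOf (WeierstrassCurve.Affine.Point.some _ _ h1) ∣ 12 :=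
    addOrderOf_dvd_of_nsmul_eq_zero n12
  have h4ne : ¬ addOrderOf (WeierstrassCurve.Affine.Point.some _ _ h1) ∣ 4 := by
    intro hd
    have h0 := addOrderOf_dvd_iff_nsmul_eq_zero.mp hd
    rw [n4] at h0
    exact WeierstrassCurve.Affine.Point.some_ne_zero h4 h0
  have h6ne : ¬ addOrderOf (WeierstrassCurve.Affine.Point.some _ _ h1) ∣ 6 := by
    intro hd
    have h0 := addOrderOf_dvd_iff_nsmul_eq_zero.mp hd
    rw [n6] at h0
    exact WeierstrassCurve.Affine.Point.some_ne_zero h6 h0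
  obtain ⟨n, hn⟩ : ∃ n, addOrderOf (WeierstrassCurve.Affine.Point.some _ _ h1) = n := ⟨_, rfl⟩
  rw [hn] at hdvd h4ne h6ne ⊢
  have hle : n ≤ 12 := Nat.le_of_dvd (by norm_num) hdvd
  clear hn
  interval_cases n <;> revert hdvd h4ne h6ne <;> norm_num
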